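/- Let D be a locally finite digraph and let R_1 be an anti-ray and R_2 a ray in D. Then there are infinitely many pairwise disjoint directed R_1–R_2 paths if and only if for every vertex x and every R ∈ ℕ there is a directed R_1–R_2 path avoiding B_R^+(x) ∪ B_R^-(x). -/

import Mathlib

open ENNReal

variable {V : Type*}

/-- The directed-path semimetric of a digraph. -/
noncomputable def ddist (adj : V → V → Prop) (x y : V) : ℕ∞ :=
  sInf {n : ℕ∞ | ∃ l : List V, List.Chain' adj (x :: l) ∧
    (x :: l).getLast (List.cons_ne_nil x l) = y ∧ n = (l.length : ℕ∞)}

section Aux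
variable {adj : V → V → Prop}

lemma ddist_le_iff {x y : V} {R : ℕ} :
    ddist adj x y ≤ (R : ℕ∞) ↔
      ∃ l : List V, List.Chain' adj (x :: l) ∧ (x :: l).getLast? = some y ∧ l.length ≤ R := by
  constructor
  · intro h
    by_contra hno
    push_neg at hno
    have hlb : (R : ℕ∞) + 1 ≤ ddist adj x y := by
      apply le_sInf
      rintro n ⟨l, hc, hl, rfl⟩
      have hl' : (x :: l).getLast? = some y := by
        rw [List.getLast?_eq_getLast_of_ne_nil (List.cons_ne_nil x l), hl]
      have h2 := hno l hc hl'
      have h3 : R + 1 ≤ l.length := by omega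
      exact_mod_cast h3
    have h2 : (R : ℕ∞) < (R : ℕ∞) + 1 := by
      have : ((R : ℕ) : ℕ∞) < ((R + 1 : ℕ) : ℕ∞) := by exact_mod_cast Nat.lt_succ_self R
      simpa using this
    exact absurd (lt_of_lt_of_le h2 (le_trans hlb h)) (lt_irrefl _)
  · rintro ⟨l, hc, hl, hlen⟩
    have hl' : (x :: l).getLast (List.cons_ne_nil x l) = y := by
      have := List.getLast?_eq_getLast_of_ne_nil (List.cons_ne_nil x l)
      rw [this] at hl
      exact Option.some_injective _ hl
    calc ddist adj x y ≤ (l.length : ℕ∞) := sInf_le ⟨l, hc, hl', rfl⟩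
    _ ≤ (R : ℕ∞) := by exact_mod_cast hlen

lemma ddist_triangle {x y z : V} {a b : ℕ} (h1 : ddist adj x y ≤ (a : ℕ∞))
    (h2 : ddist adj y z ≤ (b : ℕ∞)) : ddist adj x z ≤ ((a + b : ℕ) : ℕ∞) := by
  rw [ddist_le_iff] at h1 h2 ⊢
  obtain ⟨l₁, c₁, g₁, n₁⟩ := h1
  obtain ⟨l₂, c₂, g₂, n₂⟩ := h2
  refine ⟨l₁ ++ l₂, ?_, ?_, by simp; omega⟩
  · rw [← List.cons_append]
    cases l₂ with
    | nil => simpa using c₁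
    | cons w t =>
      obtain ⟨hyw, hwt⟩ := List.isChain_cons_cons.mp c₂
      refine List.IsChain.append c₁ hwt ?_
      intro p hp q hq
      rw [g₁] at hp
      simp at hp hq
      rw [← hp, ← hq]
      exact hyw
  · cases l₂ with
    | nil =>
      simpa using g₁.trans (by simpa using g₂)
    | cons w t =>
      rw [← List.cons_append,
        List.getLast?_append_of_ne_nil (x :: l₁) (List.cons_ne_nil w t)]
      simpa using g₂

lemma ddist_self_le (x : V) : ddist adj x x ≤ ((0 : ℕ) : ℕ∞) :=
  ddist_le_iff.mpr ⟨[], List.isChain_singleton x, by simp, le_refl _⟩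

lemma ddist_le_one {x y : V} (h : adj x y) : ddist adj x y ≤ ((1 : ℕ) : ℕ∞) :=
  ddist_le_iff.mpr ⟨[y], List.isChain_pair.mpr h, by simp, le_refl _⟩

lemma ddist_ray {R₂ : ℕ → V} (hr : ∀ i, adj (R₂ i) (R₂ (i + 1))) (j k : ℕ) :
    ddist adj (R₂ j) (R₂ (j + k)) ≤ (k : ℕ∞) := by
  induction k with
  | zero => simpa using ddist_self_le (adj := adj) (R₂ j)
  | succ k ih =>
    have := ddist_triangle ih (ddist_le_one (hr (j + k)))
    simpa [Nat.add_assoc] using this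

lemma ddist_ray_mono {R₂ : ℕ → V} (hr : ∀ i, adj (R₂ i) (R₂ (i + 1))) {v : V} {j j' n : ℕ}
    (hj : j ≤ j') (h : ddist adj v (R₂ j) ≤ (n : ℕ∞)) :
    ddist adj v (R₂ j') ≤ ((n + (j' - j) : ℕ) : ℕ∞) := by
  have hray := ddist_ray hr j (j' - j)
  rw [Nat.add_sub_cancel' hj] at hray
  exact ddist_triangle h hray

lemma ddist_getLast?_le {l : List V} {v z : V} (hc : List.Chain' adj l) (hv : v ∈ l)
    (hz : l.getLast? = some z) : ddist adj v z ≤ (l.length : ℕ∞) := by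
  obtain ⟨s, t, rfl⟩ := List.append_of_mem hv
  rw [ddist_le_iff]
  refine ⟨t, (List.isChain_append.mp hc).2.1, ?_, by simp; omega⟩
  rw [List.getLast?_append_of_ne_nil s (List.cons_ne_nil v t)] at hz
  exact hz

lemma ddist_flip_le {x y : V} {R : ℕ} (h : ddist adj y x ≤ (R : ℕ∞)) :
    ddist (flip adj) x y ≤ (R : ℕ∞) := by
  rw [ddist_le_iff] at h ⊢
  obtain ⟨l, hc, hg, hn⟩ := h
  have hmh : (y :: l).reverse.head? = some x := by rw [List.head?_reverse, hg]
  have hm' : x :: (y :: l).reverse.tail = (y :: l).reverse :=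
    List.cons_head?_tail (Option.mem_def.mpr hmh)
  refine ⟨(y :: l).reverse.tail, ?_, ?_, ?_⟩
  · rw [hm']
    exact List.isChain_reverse.mpr hc
  · rw [hm', List.getLast?_reverse]
    rfl
  · have : (y :: l).reverse.tail.length = l.length := by simp
    omega

lemma ball_finite (hout : ∀ v : V, {w | adj v w}.Finite) :
    ∀ (R : ℕ) (x : V), {v | ddist adj x v ≤ (R : ℕ∞)}.Finite := by
  intro R
  induction R with
  | zero =>
    intro x
    refine Set.Finite.subset (Set.finite_singleton x) ?_
    intro v hv
    rw [Set.mem_setOf_eq, ddist_le_iff] at hv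
    obtain ⟨l, _, hg, hn⟩ := hv
    have : l = [] := List.length_eq_zero_iff.mp (Nat.le_zero.mp hn)
    subst this
    simp at hg
    simp [hg]
  | succ R ih =>
    intro x
    refine Set.Finite.subset
      ((Set.finite_singleton x).union ((hout x).biUnion (fun w _ => ih w))) ?_
    intro v hv
    rw [Set.mem_setOf_eq, ddist_le_iff] at hv
    obtain ⟨l, hc, hg, hn⟩ := hv
    cases l with
    | nil =>
      left
      simp at hg
      simp [hg]
    | cons w t =>
      right
      obtain ⟨hxw, hwt⟩ := List.isChain_cons_cons.mp hc
      refine Set.mem_biUnion hxw ?_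
      rw [Set.mem_setOf_eq, ddist_le_iff]
      refine ⟨t, hwt, ?_, by simp at hn; omega⟩
      rw [List.getLast?_cons_cons] at hg
      exact hg

end Aux

/-- A ray in a digraph: an injective sequence of vertices with an edge from each
vertex to the next. -/
def IsRay (adj : V → V → Prop) (x : ℕ → V) : Prop :=
  Function.Injective x ∧ ∀ i : ℕ, adj (x i) (x (i + 1))

/-- An anti-ray in a digraph: an injective sequence of vertices with an edge from
each vertex to the previous one. -/
def IsAntiRay (adj : V → V → Prop) (x : ℕ → V) : Prop :=
  Function.Injective x ∧ ∀ i : ℕ, adj (x (i + 1)) (x i)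

/-- A directed `R₁`–`R₂` path: a directed walk starting at a vertex of `R₁` and
ending at a vertex of `R₂`. -/
def IsLinkPath (adj : V → V → Prop) (R₁ R₂ : ℕ → V) (l : List V) : Prop :=
  List.Chain' adj l ∧ (∃ i : ℕ, l.head? = some (R₁ i)) ∧ ∃ j : ℕ, l.getLast? = some (R₂ j)

open Classical in
noncomputable def pickPath (adj : V → V → Prop) (R₁ R₂ : ℕ → V) (S : List V) : List V :=
  if h : ∃ l, IsLinkPath adj R₁ R₂ l ∧ ∀ v ∈ l, v ∉ S then h.choose else []

noncomputable def accPaths (adj : V → V → Prop) (R₁ R₂ : ℕ → V) : ℕ → List V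
  | 0 => []
  | n + 1 => accPaths adj R₁ R₂ n ++ pickPath adj R₁ R₂ (accPaths adj R₁ R₂ n)

/-- Let `D` be a locally finite digraph, `R₁` an anti-ray and `R₂` a ray.  Then
there are infinitely many pairwise disjoint directed `R₁`–`R₂` paths if and only if
for every vertex `x` and every `R ∈ ℕ` there is a directed `R₁`–`R₂` path avoiding
`B_R⁺(x) ∪ B_R⁻(x)`. -/
theorem disjoint_paths_iff_paths_outside_balls {V : Type*} (adj : V → V → Prop)
    (hout : ∀ v : V, {w | adj v w}.Finite) (hin : ∀ v : V, {w | adj w v}.Finite)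
    (R₁ R₂ : ℕ → V) (h₁ : IsAntiRay adj R₁) (h₂ : IsRay adj R₂) :
    (∃ F : ℕ → List V, (∀ n, IsLinkPath adj R₁ R₂ (F n)) ∧
      ∀ n n', n ≠ n' → ∀ v : V, v ∈ F n → v ∉ F n') ↔
    (∀ (x : V) (R : ℕ), ∃ l : List V, IsLinkPath adj R₁ R₂ l ∧
      ∀ v ∈ l, ¬ ddist adj x v ≤ (R : ℕ∞) ∧ ¬ ddist adj v x ≤ (R : ℕ∞)) := by
  constructor
  · rintro ⟨F, hF, hdisj⟩ x R
    have hBout : {v | ddist adj x v ≤ (R : ℕ∞)}.Finite := ball_finite hout R x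
    have hBin : {v | ddist adj v x ≤ (R : ℕ∞)}.Finite := by
      refine Set.Finite.subset (ball_finite (adj := flip adj) hin R x) ?_
      intro v hv
      exact ddist_flip_le hv
    have hB : {v | ddist adj x v ≤ (R : ℕ∞) ∨ ddist adj v x ≤ (R : ℕ∞)}.Finite := by
      rw [Set.setOf_or]
      exact hBout.union hBin
    by_contra hcon
    have hall : ∀ n, ∃ v, v ∈ F n ∧
        v ∈ {v | ddist adj x v ≤ (R : ℕ∞) ∨ ddist adj v x ≤ (R : ℕ∞)} := by
      intro n
      by_contra hno
      push_neg at hno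
      refine hcon ⟨F n, hF n, ?_⟩
      intro v hv
      have := hno v hv
      rw [Set.mem_setOf_eq] at this
      exact ⟨fun h => this (Or.inl h), fun h => this (Or.inr h)⟩
    choose g hg1 hg2 using hall
    have hinj : Function.Injective g := by
      intro n n' e
      by_contra hne
      exact hdisj n n' hne (g n) (hg1 n) (e ▸ hg1 n')
    exact absurd (Set.infinite_of_injective_forall_mem hinj hg2) hB.not_infinite
  · intro hyp
    have hnear : ∀ l, IsLinkPath adj R₁ R₂ l →
        ∀ v ∈ l, ∃ j m : ℕ, ddist adj v (R₂ j) ≤ (m : ℕ∞) := by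
      rintro l ⟨hc, -, j, hg⟩ v hv
      exact ⟨j, l.length, ddist_getLast?_le hc hv hg⟩
    have hcomb : ∀ S : List V, (∀ v ∈ S, ∃ j m : ℕ, ddist adj v (R₂ j) ≤ (m : ℕ∞)) →
        ∃ J N : ℕ, ∀ v ∈ S, ddist adj v (R₂ J) ≤ (N : ℕ∞) := by
      intro S
      induction S with
      | nil => exact fun _ => ⟨0, 0, by simp⟩
      | cons a S ih =>
        intro h
        obtain ⟨J, N, hJN⟩ := ih (fun v hv => h v (List.mem_cons_of_mem _ hv))
        obtain ⟨j, n, hjn⟩ := h a List.mem_cons_self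
        refine ⟨max J j, max (N + max J j) (n + max J j), ?_⟩
        intro v hv
        rcases List.mem_cons.mp hv with rfl | hv
        · refine le_trans (ddist_ray_mono h₂.2 (le_max_right J j) hjn) ?_
          exact_mod_cast (by omega : n + (max J j - j) ≤ max (N + max J j) (n + max J j))
        · refine le_trans (ddist_ray_mono h₂.2 (le_max_left J j) (hJN v hv)) ?_
          exact_mod_cast (by omega : N + (max J j - J) ≤ max (N + max J j) (n + max J j))
    have hpick : ∀ S : List V, (∀ v ∈ S, ∃ j m : ℕ, ddist adj v (R₂ j) ≤ (m : ℕ∞)) →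
        IsLinkPath adj R₁ R₂ (pickPath adj R₁ R₂ S) ∧
          ∀ v ∈ pickPath adj R₁ R₂ S, v ∉ S := by
      intro S hS
      obtain ⟨J, N, hJN⟩ := hcomb S hS
      obtain ⟨l, hl, hlav⟩ := hyp (R₂ J) N
      have hex : ∃ l, IsLinkPath adj R₁ R₂ l ∧ ∀ v ∈ l, v ∉ S :=
        ⟨l, hl, fun v hv hvS => (hlav v hv).2 (hJN v hvS)⟩
      rw [pickPath, dif_pos hex]
      exact hex.choose_spec
    have hacc : ∀ n, ∀ v ∈ accPaths adj R₁ R₂ n, ∃ j m : ℕ, ddist adj v (R₂ j) ≤ (m : ℕ∞) := by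
      intro n
      induction n with
      | zero => simp [accPaths]
      | succ n ih =>
        intro v hv
        rw [accPaths, List.mem_append] at hv
        rcases hv with hv | hv
        · exact ih v hv
        · exact hnear _ (hpick _ ih).1 v hv
    refine ⟨fun n => pickPath adj R₁ R₂ (accPaths adj R₁ R₂ n),
      fun n => (hpick _ (hacc n)).1, ?_⟩
    have havoid : ∀ n, ∀ v ∈ pickPath adj R₁ R₂ (accPaths adj R₁ R₂ n),
        v ∉ accPaths adj R₁ R₂ n := fun n => (hpick _ (hacc n)).2
    have hsub : ∀ n, ∀ v ∈ pickPath adj R₁ R₂ (accPaths adj R₁ R₂ n),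
        v ∈ accPaths adj R₁ R₂ (n + 1) := by
      intro n v hv
      rw [accPaths, List.mem_append]
      exact Or.inr hv
    have hmono : ∀ n n', n ≤ n' → ∀ v ∈ accPaths adj R₁ R₂ n, v ∈ accPaths adj R₁ R₂ n' := by
      intro n n' hle
      induction n', hle using Nat.le_induction with
      | base => exact fun v hv => hv
      | succ n' _ ih =>
        intro v hv
        rw [accPaths, List.mem_append]
        exact Or.inl (ih v hv)
    intro n n' hne v hvn hvn'
    rcases Nat.lt_or_ge n n' with hlt | hge
    · exact havoid n' v hvn' (hmono (n + 1) n' hlt (v) (hsub n v hvn))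
    · have hlt : n' < n := lt_of_le_of_ne hge (Ne.symm hne)
      exact havoid n v hvn (hmono (n' + 1) n hlt v (hsub n' v hvn'))
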